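/- Let P = N(0,1) and Q = N(μ,1) be one-dimensional Gaussians with μ ≥ 0. Then for every measurable set E with Q(E) ≤ α, it holds that P(E) ≤ 1 - Φ(Φ^{-1}(1-α) - μ); equivalently, the blow-up function of (P,Q) at level α equals 1 - Φ(Φ^{-1}(1-α) - μ), with the supremum attained by a half-line threshold set. -/

import Mathlib

open MeasureTheory ProbabilityTheory Set

/-- Standard normal CDF. -/
noncomputable def Phi : ℝ → ℝ := fun x => ProbabilityTheory.cdf (gaussianReal 0 1) x

/-- Inverse of the standard normal CDF. -/
noncomputable def PhiInv : ℝ → ℝ := Function.invFun Phi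

/-- Blow-up function `B_{(P,Q)}(α) = sup {P(E) : Q(E) ≤ α}`. -/
noncomputable def blowUp {Ω : Type*} [MeasurableSpace Ω] (P Q : Measure Ω) (α : ℝ) : ℝ :=
  sSup {x : ℝ | ∃ E : Set Ω, MeasurableSet E ∧ (Q E).toReal ≤ α ∧ x = (P E).toReal}

lemma gauss_toReal (m : ℝ) (s : Set ℝ) (hs : MeasurableSet s) :
    (gaussianReal m 1 s).toReal = ∫ x in s, gaussianPDFReal m 1 x := by
  rw [gaussianReal_apply_eq_integral m one_ne_zero s,
    ENNReal.toReal_ofReal (setIntegral_nonneg hs fun x _ => gaussianPDFReal_nonneg m 1 x)]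

lemma Phi_eq (x : ℝ) : Phi x = (gaussianReal 0 1 (Iic x)).toReal := by
  rw [Phi, cdf_eq_real, measureReal_def]

lemma Phi_eq_integral (x : ℝ) : Phi x = ∫ t in Iic x, gaussianPDFReal 0 1 t := by
  rw [Phi_eq, gauss_toReal 0 _ measurableSet_Iic]

lemma Phi_add_integral {a b : ℝ} (hab : a ≤ b) :
    Phi b = Phi a + ∫ t in Ioc a b, gaussianPDFReal 0 1 t := by
  rw [Phi_eq_integral, Phi_eq_integral, ← setIntegral_union (Iic_disjoint_Ioc le_rfl)
    measurableSet_Ioc ((integrable_gaussianPDFReal 0 1).integrableOn)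
    ((integrable_gaussianPDFReal 0 1).integrableOn), Iic_union_Ioc_eq_Iic hab]

lemma Phi_continuous : Continuous Phi := by
  have h : ∀ x, Phi x = Phi 0 + ∫ t in (0:ℝ)..x, gaussianPDFReal 0 1 t := by
    intro x
    rcases le_or_gt 0 x with hx | hx
    · rw [intervalIntegral.integral_of_le hx, Phi_add_integral hx]
    · rw [intervalIntegral.integral_of_ge hx.le, Phi_add_integral hx.le]
      ring
  have : Phi = fun x => Phi 0 + ∫ t in (0:ℝ)..x, gaussianPDFReal 0 1 t := funext h
  rw [this]
  exact continuous_const.add ((integrable_gaussianPDFReal 0 1).continuous_primitive 0)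

lemma Phi_surj {y : ℝ} (hy0 : 0 < y) (hy1 : y < 1) : ∃ x, Phi x = y := by
  have hbot : Filter.Tendsto Phi Filter.atBot (nhds 0) := tendsto_cdf_atBot _
  have htop : Filter.Tendsto Phi Filter.atTop (nhds 1) := tendsto_cdf_atTop _
  obtain ⟨a, ha⟩ := (hbot.eventually_lt_const hy0).exists
  obtain ⟨b, hb⟩ := (htop.eventually_const_lt hy1).exists
  have := intermediate_value_uIcc (a := a) (b := b) Phi_continuous.continuousOn
  have hmem : y ∈ uIcc (Phi a) (Phi b) := by
    rw [mem_uIcc]; left; exact ⟨ha.le, hb.le⟩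
  obtain ⟨x, _, hx⟩ := this hmem
  exact ⟨x, hx⟩

lemma Phi_neg (x : ℝ) : Phi (-x) = 1 - Phi x := by
  have hmap : (gaussianReal 0 1).map (fun y => (-1 : ℝ) * y) = gaussianReal 0 1 := by
    have := gaussianReal_map_const_mul (μ := 0) (v := 1) (-1)
    simpa using this
  have h1 : gaussianReal 0 1 (Iic (-x)) = gaussianReal 0 1 (Ici x) := by
    conv_lhs => rw [← hmap]
    rw [Measure.map_apply (measurable_const_mul _) measurableSet_Iic]
    congr 1
    ext y
    simp [neg_le_neg_iff]
  have h2 : gaussianReal 0 1 (Iio x) = gaussianReal 0 1 (Iic x) := by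
    have hsing : gaussianReal 0 1 {x} = 0 :=
      gaussianReal_absolutelyContinuous 0 one_ne_zero (measure_singleton x)
    have : gaussianReal 0 1 (Iic x) ≤ gaussianReal 0 1 (Iio x) + gaussianReal 0 1 {x} := by
      rw [← Iio_union_right]; exact measure_union_le _ _
    rw [hsing, add_zero] at this
    exact le_antisymm (measure_mono Iio_subset_Iic_self) this
  have h3 : gaussianReal 0 1 (Ici x) = 1 - gaussianReal 0 1 (Iio x) := by
    rw [← compl_Iio, measure_compl measurableSet_Iio (measure_ne_top _ _), measure_univ]
  rw [Phi_eq, Phi_eq, h1, h3, h2,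
    ENNReal.toReal_sub_of_le prob_le_one ENNReal.one_ne_top, ENNReal.toReal_one]

lemma gaussQ_Iic (μ τ : ℝ) : (gaussianReal μ 1 (Iic τ)).toReal = Phi (τ - μ) := by
  have hmap : (gaussianReal 0 1).map (fun y => y + μ) = gaussianReal μ 1 := by
    have := gaussianReal_map_add_const (μ := 0) (v := 1) μ
    simpa using this
  rw [← hmap, Measure.map_apply (measurable_add_const _) measurableSet_Iic]
  have hpre : (fun y => y + μ) ⁻¹' Iic τ = Iic (τ - μ) := by
    ext y; simp [le_sub_iff_add_le]
  rw [hpre, ← Phi_eq]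

lemma pdf_ratio (μ x : ℝ) :
    gaussianPDFReal 0 1 x = Real.exp (μ^2/2 - μ*x) * gaussianPDFReal μ 1 x := by
  simp only [gaussianPDFReal, NNReal.coe_one, mul_one]
  rw [mul_comm (Real.exp _), mul_assoc, ← Real.exp_add]
  ring_nf

lemma NP_bound {μ : ℝ} (hμ : 0 ≤ μ) (τ : ℝ) {E : Set ℝ} (hE : MeasurableSet E)
    (hQE : ∫ x in E, gaussianPDFReal μ 1 x ≤ ∫ x in Iic τ, gaussianPDFReal μ 1 x) :
    ∫ x in E, gaussianPDFReal 0 1 x ≤ ∫ x in Iic τ, gaussianPDFReal 0 1 x := by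
  set f := gaussianPDFReal 0 1 with hf
  set g := gaussianPDFReal μ 1 with hg
  set k := Real.exp (μ^2/2 - μ*τ) with hk
  have hk0 : 0 ≤ k := (Real.exp_pos _).le
  have intf : Integrable f := integrable_gaussianPDFReal 0 1
  have intg : Integrable g := integrable_gaussianPDFReal μ 1
  have intkg : Integrable (fun x => k * g x) := intg.const_mul k
  have hle : ∀ x, τ ≤ x → f x ≤ k * g x := by
    intro x hx
    rw [hf, pdf_ratio μ x]
    apply mul_le_mul_of_nonneg_right _ (gaussianPDFReal_nonneg μ 1 x)
    exact Real.exp_le_exp.2 (by nlinarith [mul_le_mul_of_nonneg_left hx hμ])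
  have hge : ∀ x, x ≤ τ → k * g x ≤ f x := by
    intro x hx
    rw [hf, pdf_ratio μ x]
    apply mul_le_mul_of_nonneg_right _ (gaussianPDFReal_nonneg μ 1 x)
    exact Real.exp_le_exp.2 (by nlinarith [mul_le_mul_of_nonneg_left hx hμ])
  have h1 : (∫ x in E ∩ Iic τ, f x) + ∫ x in E \ Iic τ, f x = ∫ x in E, f x :=
    integral_inter_add_diff measurableSet_Iic intf.integrableOn
  have h2 : (∫ x in Iic τ ∩ E, f x) + ∫ x in Iic τ \ E, f x = ∫ x in Iic τ, f x :=
    integral_inter_add_diff hE intf.integrableOn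
  have h3 : (∫ x in E ∩ Iic τ, g x) + ∫ x in E \ Iic τ, g x = ∫ x in E, g x :=
    integral_inter_add_diff measurableSet_Iic intg.integrableOn
  have h4 : (∫ x in Iic τ ∩ E, g x) + ∫ x in Iic τ \ E, g x = ∫ x in Iic τ, g x :=
    integral_inter_add_diff hE intg.integrableOn
  have hcomm : E ∩ Iic τ = Iic τ ∩ E := inter_comm _ _
  rw [hcomm] at h1 h3
  have hA : ∫ x in E \ Iic τ, f x ≤ k * ∫ x in E \ Iic τ, g x := by
    rw [← integral_const_mul]
    exact setIntegral_mono_on intf.integrableOn intkg.integrableOn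
      (hE.diff measurableSet_Iic) (fun x hx => hle x (not_le.mp hx.2).le)
  have hB : k * ∫ x in Iic τ \ E, g x ≤ ∫ x in Iic τ \ E, f x := by
    rw [← integral_const_mul]
    exact setIntegral_mono_on intkg.integrableOn intf.integrableOn
      (measurableSet_Iic.diff hE) (fun x hx => hge x hx.1)
  rw [← h3, ← h4] at hQE
  have hkg : k * (∫ x in E \ Iic τ, g x) ≤ k * ∫ x in Iic τ \ E, g x := by
    apply mul_le_mul_of_nonneg_left _ hk0
    linarith
  linarith

theorem stmt3 (μ : ℝ) (hμ : 0 ≤ μ) (α : ℝ) (hα : α ∈ Ioo (0:ℝ) 1)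
    (P Q : Measure ℝ) (hP : P = gaussianReal 0 1) (hQ : Q = gaussianReal μ 1) :
    (∀ E : Set ℝ, MeasurableSet E → (Q E).toReal ≤ α →
      (P E).toReal ≤ 1 - Phi (PhiInv (1 - α) - μ)) ∧
    blowUp P Q α = 1 - Phi (PhiInv (1 - α) - μ) ∧
    (∃ τ : ℝ, (Q (Iic τ)).toReal ≤ α ∧
      (P (Iic τ)).toReal = 1 - Phi (PhiInv (1 - α) - μ)) := by
  obtain ⟨hα0, hα1⟩ := hα
  subst hP hQ
  set t := PhiInv (1 - α) with htdef
  have ht : Phi t = 1 - α :=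
    Function.invFun_eq (Phi_surj (by linarith) (by linarith))
  set τ := μ - t with hτdef
  have hQIic : (gaussianReal μ 1 (Iic τ)).toReal = α := by
    rw [gaussQ_Iic]
    have : τ - μ = -t := by rw [hτdef]; ring
    rw [this, Phi_neg, ht]; ring
  have hPIic : (gaussianReal 0 1 (Iic τ)).toReal = 1 - Phi (t - μ) := by
    rw [← Phi_eq]
    have : τ = -(t - μ) := by rw [hτdef]; ring
    rw [this, Phi_neg]
  have main : ∀ E : Set ℝ, MeasurableSet E → (gaussianReal μ 1 E).toReal ≤ α →
      (gaussianReal 0 1 E).toReal ≤ 1 - Phi (t - μ) := by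
    intro E hE hQE
    rw [gauss_toReal μ E hE] at hQE
    rw [gauss_toReal 0 E hE]
    rw [← hPIic, gauss_toReal 0 _ measurableSet_Iic]
    apply NP_bound hμ τ hE
    rw [← gauss_toReal μ _ measurableSet_Iic, hQIic]
    exact hQE
  refine ⟨main, ?_, τ, hQIic.le, hPIic⟩
  have hmem : (1 - Phi (t - μ)) ∈
      {x : ℝ | ∃ E : Set ℝ, MeasurableSet E ∧ (gaussianReal μ 1 E).toReal ≤ α ∧
        x = (gaussianReal 0 1 E).toReal} :=
    ⟨Iic τ, measurableSet_Iic, hQIic.le, hPIic.symm⟩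
  have hub : ∀ x ∈ {x : ℝ | ∃ E : Set ℝ, MeasurableSet E ∧ (gaussianReal μ 1 E).toReal ≤ α ∧
      x = (gaussianReal 0 1 E).toReal}, x ≤ 1 - Phi (t - μ) := by
    rintro x ⟨E, hE, hQE, rfl⟩
    exact main E hE hQE
  exact le_antisymm (csSup_le ⟨_, hmem⟩ hub) (le_csSup ⟨_, hub⟩ hmem)
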